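/- Let c₁, …, cₙ be a closed chain of circles with consecutive circles externally tangent at points Sᵢ, and let fᵢ be the homothety with center Sᵢ and ratio -rᵢ₊₁/rᵢ. If n is odd, then the composition g = fₙ ∘ ⋯ ∘ f₁ is the point reflection at the center Z of c₁; in particular, for any point P₁ on c₁, the segment from P₁ to g(P₁) is a diameter of c₁. -/

import Mathlib

theorem odd_chain_composition_is_point_reflection
    (n : ℕ) (hn : 0 < n) (hno : Odd n)
    (O : ZMod n → EuclideanSpace ℝ (Fin 2)) (r : ZMod n → ℝ)
    (hr : ∀ i, 0 < r i)
    (htan : ∀ i, dist (O i) (O (i + 1)) = r i + r (i + 1))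
    (P : ℕ → EuclideanSpace ℝ (Fin 2))
    (hP0 : P 0 ∈ Metric.sphere (O 0) (r 0))
    (hstep : ∀ i : ℕ, i < n →
      P (i + 1) =
        (O (i : ZMod n) + (r (i : ZMod n) / (r (i : ZMod n) + r ((i : ZMod n) + 1))) •
            (O ((i : ZMod n) + 1) - O (i : ZMod n))) +
          (-(r ((i : ZMod n) + 1) / r (i : ZMod n))) •
            (P i - (O (i : ZMod n) + (r (i : ZMod n) / (r (i : ZMod n) + r ((i : ZMod n) + 1))) •
              (O ((i : ZMod n) + 1) - O (i : ZMod n))))) :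
    P n = (2 : ℝ) • O 0 - P 0 := by
  have key : ∀ i : ℕ, i ≤ n → P i - O (i : ZMod n)
      = ((-1 : ℝ) ^ i * (r (i : ZMod n) / r 0)) • (P 0 - O 0) := by
    intro i
    induction i with
    | zero =>
      intro _
      simp [div_self (hr 0).ne']
    | succ i ih =>
      intro hi
      have hin : i < n := Nat.lt_of_succ_le hi
      have ha : r (i : ZMod n) ≠ 0 := (hr _).ne'
      have hb : r ((i : ZMod n) + 1) ≠ 0 := (hr _).ne'
      have hab : r (i : ZMod n) + r ((i : ZMod n) + 1) ≠ 0 :=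
        (add_pos (hr _) (hr _)).ne'
      have hr0 : r 0 ≠ 0 := (hr 0).ne'
      have hstep' : P (i + 1) - O ((i : ZMod n) + 1)
          = (-(r ((i : ZMod n) + 1) / r (i : ZMod n))) • (P i - O (i : ZMod n)) := by
        rw [hstep i hin]
        match_scalars <;> field_simp <;> ring
      have hcast : (((i + 1 : ℕ)) : ZMod n) = (i : ZMod n) + 1 := by push_cast; ring
      rw [hcast, hstep', ih (le_of_lt hin), smul_smul]
      congr 1
      rw [pow_succ]
      field_simp
  have h := key n le_rfl
  rw [ZMod.natCast_self n, hno.neg_one_pow, div_self (hr 0).ne',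
    sub_eq_iff_eq_add] at h
  rw [h]
  module
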